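/- Unconditional energy stability of the first-order IEQ-DG scheme with projection (inequality (3.10) of Theorem 3.1): let Δt > 0, let T : H → H be a self-adjoint bounded linear operator, let P : H → V be the orthogonal projection onto V, let u⁰, u¹, q⁰, q¹ ∈ V and U⁰ ∈ H, and set U¹ := U⁰ + (1/2) T (u¹ − u⁰). Suppose that for all φ, ψ ∈ V: ⟨(u¹ − u⁰)/Δt, φ⟩ + b(u¹, φ) = −A(φ, q¹) − ⟨T U¹, φ⟩, ⟨q⁰, ψ⟩ = A(u⁰, ψ) and ⟨q¹, ψ⟩ = A(u¹, ψ). Then E(u¹, q¹, P U¹) ≤ E(u⁰, q⁰, U⁰) − (1/Δt)‖u¹ − u⁰‖² − (1/2)‖q¹ − q⁰‖² − ‖U¹ − U⁰‖² − (1/2) b(u¹ − u⁰, u¹ − u⁰), for any Δt > 0. -/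

import Mathlib

/-- Unconditional energy stability of the first-order IEQ-DG scheme with projection
(inequality (3.10) of Theorem 3.1). -/
theorem stmt_5
    {H : Type*} [NormedAddCommGroup H] [InnerProductSpace ℝ H] [CompleteSpace H]
    (V : Submodule ℝ H) [FiniteDimensional ℝ V]
    (A : V →ₗ[ℝ] V →ₗ[ℝ] ℝ)
    (b : V →ₗ[ℝ] V →ₗ[ℝ] ℝ)
    (hb_symm : ∀ x y : V, b x y = b y x)
    (hb_pos : ∀ x : V, 0 ≤ b x x)
    (E : V → V → H → ℝ)
    (hE : ∀ (u q : V) (U : H), E u q U = (1/2) * ‖(q : H)‖^2 + ‖U‖^2 + (1/2) * b u u)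
    (Δt : ℝ) (hΔt : 0 < Δt)
    (T : H →L[ℝ] H)
    (hT : ∀ x y : H, (inner ℝ (T x) y : ℝ) = (inner ℝ x (T y) : ℝ))
    (u₀ u₁ q₀ q₁ : V) (U₀ U₁ : H)
    (hU₁ : U₁ = U₀ + (1/2 : ℝ) • T ((u₁ : H) - (u₀ : H)))
    (heq1 : ∀ φ : V,
      (inner ℝ ((1/Δt) • ((u₁ : H) - (u₀ : H))) (φ : H) : ℝ) + b u₁ φ
        = -A φ q₁ - (inner ℝ (T U₁) (φ : H) : ℝ))
    (heq2 : ∀ ψ : V, (inner ℝ (q₀ : H) (ψ : H) : ℝ) = A u₀ ψ)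
    (heq3 : ∀ ψ : V, (inner ℝ (q₁ : H) (ψ : H) : ℝ) = A u₁ ψ) :
    E u₁ q₁ ((V.orthogonalProjectionOnto U₁ : V) : H)
      ≤ E u₀ q₀ U₀ - (1/Δt) * ‖(u₁ : H) - (u₀ : H)‖^2
        - (1/2) * ‖(q₁ : H) - (q₀ : H)‖^2 - ‖U₁ - U₀‖^2
        - (1/2) * b (u₁ - u₀) (u₁ - u₀) := by

  have h1 := heq1 (u₁ - u₀)
  have hd : ((u₁ - u₀ : V) : H) = (u₁ : H) - (u₀ : H) := by push_cast; ring
  rw [hd] at h1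
  have hinner : (inner ℝ ((1/Δt) • ((u₁:H) - (u₀:H))) ((u₁:H) - (u₀:H)) : ℝ)
      = (1/Δt) * ‖(u₁:H) - (u₀:H)‖^2 := by
    rw [real_inner_smul_left, real_inner_self_eq_norm_sq]
  -- A term
  have hA : (A (u₁ - u₀)) q₁
      = (inner ℝ ((q₁:H)) ((q₁:H)) : ℝ) - (inner ℝ ((q₀:H)) ((q₁:H)) : ℝ) := by
    rw [map_sub, LinearMap.sub_apply, ← heq3 q₁, ← heq2 q₁]
  have hq : (inner ℝ ((q₁:H)) ((q₁:H)) : ℝ) - (inner ℝ ((q₀:H)) ((q₁:H)) : ℝ)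
      = (1/2) * (‖(q₁:H)‖^2 - ‖(q₀:H)‖^2 + ‖(q₁:H) - (q₀:H)‖^2) := by
    have e1 : ‖(q₁:H) - (q₀:H)‖^2
        = ‖(q₁:H)‖^2 - 2 * (inner ℝ ((q₁:H)) ((q₀:H)) : ℝ) + ‖(q₀:H)‖^2 :=
      norm_sub_sq_real _ _
    have e2 : (inner ℝ ((q₁:H)) ((q₁:H)) : ℝ) = ‖(q₁:H)‖^2 := real_inner_self_eq_norm_sq _
    have e3 : (inner ℝ ((q₀:H)) ((q₁:H)) : ℝ) = (inner ℝ ((q₁:H)) ((q₀:H)) : ℝ) :=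
      real_inner_comm _ _
    linarith
  -- T term
  have hTd : T ((u₁:H) - (u₀:H)) = (2:ℝ) • (U₁ - U₀) := by
    rw [hU₁, add_sub_cancel_left, smul_smul]; norm_num
  have hTterm : (inner ℝ (T U₁) ((u₁:H) - (u₀:H)) : ℝ)
      = ‖U₁‖^2 - ‖U₀‖^2 + ‖U₁ - U₀‖^2 := by
    rw [hT U₁ _, hTd, real_inner_smul_right]
    have e1 : ‖U₁ - U₀‖^2 = ‖U₁‖^2 - 2 * (inner ℝ U₁ U₀ : ℝ) + ‖U₀‖^2 :=
      norm_sub_sq_real _ _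
    have e2 : (inner ℝ U₁ (U₁ - U₀) : ℝ) = (inner ℝ U₁ U₁ : ℝ) - (inner ℝ U₁ U₀ : ℝ) :=
      inner_sub_right _ _ _
    have e3 : (inner ℝ U₁ U₁ : ℝ) = ‖U₁‖^2 := real_inner_self_eq_norm_sq _
    linarith
  -- b term
  have hbterm : (b u₁) (u₁ - u₀)
      = (1/2) * ((b u₁) u₁ - (b u₀) u₀ + (b (u₁ - u₀)) (u₁ - u₀)) := by
    have e1 : (b (u₁ - u₀)) (u₁ - u₀)
        = (b u₁) u₁ - (b u₁) u₀ - ((b u₀) u₁ - (b u₀) u₀) := by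
      simp only [map_sub, LinearMap.sub_apply]; ring
    have e2 : (b u₁) (u₁ - u₀) = (b u₁) u₁ - (b u₁) u₀ := map_sub _ _ _
    have e3 := hb_symm u₀ u₁
    linarith
  -- projection norm bound
  have hP : ‖((V.orthogonalProjectionOnto U₁ : V) : H)‖ ≤ ‖U₁‖ := by
    have h := (V.orthogonalProjectionOnto).le_opNorm U₁
    have h2 : ‖V.orthogonalProjectionOnto‖ ≤ 1 := V.orthogonalProjectionOnto_norm_le
    have h3 : ‖((V.orthogonalProjectionOnto U₁ : V) : H)‖ = ‖V.orthogonalProjectionOnto U₁‖ := rfl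
    nlinarith [norm_nonneg U₁, norm_nonneg (V.orthogonalProjectionOnto U₁)]
  have hP2 : ‖((V.orthogonalProjectionOnto U₁ : V) : H)‖^2 ≤ ‖U₁‖^2 := by
    nlinarith [norm_nonneg ((V.orthogonalProjectionOnto U₁ : V) : H)]
  rw [hE, hE]
  rw [hinner, hA, hq, hbterm, hTterm] at h1
  linarith
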